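/- Let D be an E-simple domain with maximal subfield K (the set of Egyptian elements together with 0). Let f ∈ D \ K and u ∈ K nonzero. Then 1/(f+u) and 1/f are associates in R(D): they differ by multiplication by a unit of R(D). -/

import Mathlib

noncomputable def recip (D : Type*) [CommRing D] [IsDomain D] : Subring (FractionRing D) :=
  Subring.closure {x | ∃ d : D, d ≠ 0 ∧ x = (algebraMap D (FractionRing D) d)⁻¹}

/-- `D` is E-simple: every nonzero Egyptian element is a unit. -/
def ESimple (D : Type*) [CommRing D] [IsDomain D] : Prop :=
  ∀ d : D, d ≠ 0 → algebraMap D (FractionRing D) d ∈ recip D → IsUnit d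

/-- Let `D` be E-simple with maximal subfield `K` (the Egyptian
elements together with `0`).  If `f ∈ D \ K` (i.e. `f` is not Egyptian) and `u ∈ K` is
nonzero (i.e. `u ≠ 0` is Egyptian), then `1/(f+u)` and `1/f` are associates in `R(D)`:
they differ by a unit of `R(D)`. -/
theorem stmt_14 {D : Type*} [CommRing D] [IsDomain D] (hD : ESimple D)
    (f u : D)
    (hf : algebraMap D (FractionRing D) f ∉ recip D)
    (hu0 : u ≠ 0) (hu : algebraMap D (FractionRing D) u ∈ recip D) :
    ∃ w : (recip D)ˣ,
      (algebraMap D (FractionRing D) (f + u))⁻¹ =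
        ((w : recip D) : FractionRing D) * (algebraMap D (FractionRing D) f)⁻¹ := by
  set φ := algebraMap D (FractionRing D) with hφdef
  have hφ : Function.Injective φ := IsFractionRing.injective D (FractionRing D)
  have hf0 : f ≠ 0 := by
    rintro rfl
    exact hf (by rw [map_zero]; exact Subring.zero_mem _)
  have ha : φ f ≠ 0 := (map_ne_zero_iff φ hφ).mpr hf0
  have hfu : f + u ≠ 0 := by
    intro h
    apply hf
    have : φ f = - φ u := by
      have := congrArg φ h
      rw [map_add, map_zero] at this
      linear_combination this
    rw [this]
    exact Subring.neg_mem _ hu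
  have hab : φ (f + u) ≠ 0 := (map_ne_zero_iff φ hφ).mpr hfu
  have hinv_f : (φ f)⁻¹ ∈ recip D := Subring.subset_closure ⟨f, hf0, rfl⟩
  have hinv_fu : (φ (f + u))⁻¹ ∈ recip D := Subring.subset_closure ⟨f + u, hfu, rfl⟩
  have hval : φ f * (φ (f + u))⁻¹ ∈ recip D := by
    have h1 : φ f * (φ (f + u))⁻¹ = 1 - φ u * (φ (f + u))⁻¹ := by
      rw [map_add] at hab ⊢
      field_simp
      ring
    rw [h1]
    exact Subring.sub_mem _ (Subring.one_mem _) (Subring.mul_mem _ hu hinv_fu)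
  have hinvval : φ (f + u) * (φ f)⁻¹ ∈ recip D := by
    have h1 : φ (f + u) * (φ f)⁻¹ = 1 + φ u * (φ f)⁻¹ := by
      rw [map_add]
      field_simp
    rw [h1]
    exact Subring.add_mem _ (Subring.one_mem _) (Subring.mul_mem _ hu hinv_f)
  have hmul : (⟨φ f * (φ (f + u))⁻¹, hval⟩ : recip D) * ⟨φ (f + u) * (φ f)⁻¹, hinvval⟩ = 1 := by
    ext
    push_cast
    rw [show φ f * (φ (f + u))⁻¹ * (φ (f + u) * (φ f)⁻¹)
        = (φ f * (φ f)⁻¹) * ((φ (f + u))⁻¹ * φ (f + u)) from by ring,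
      mul_inv_cancel₀ ha, inv_mul_cancel₀ hab, one_mul]
  refine ⟨⟨⟨φ f * (φ (f + u))⁻¹, hval⟩, ⟨φ (f + u) * (φ f)⁻¹, hinvval⟩, hmul, by rw [mul_comm] at hmul; exact hmul⟩, ?_⟩
  simp only [Units.val_mk]
  rw [mul_comm (φ f), mul_assoc, mul_inv_cancel₀ ha, mul_one]
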